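/- Let I = (I_1, ..., I_n) be a Grassmann necklace with associated decorated permutation π, and suppose J ∈ binom([n],k) is weakly separated from all I_r but J ∉ M_I. Then there exists s ∈ [n] such that for every r ∈ [n], with respect to the order ≤_s, either the minimal element of J∖I_r is less than the minimal element of I_r∖J for all r, or the maximal element of I_r∖J is greater than the maximal element of J∖I_r for all r. In particular, J ≱_s I_s for this s. -/

import Mathlib

def cpos {n : ℕ} (i a : Fin n) : ℕ := ((a - i : Fin n) : ℕ)

def CyclicallyOrdered {n : ℕ} (a b c d : Fin n) : Prop :=
  0 < cpos a b ∧ cpos a b < cpos a c ∧ cpos a c < cpos a d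

instance {n : ℕ} (a b c d : Fin n) : Decidable (CyclicallyOrdered a b c d) := by
  unfold CyclicallyOrdered; infer_instance

def WeaklySeparated {n : ℕ} (I J : Finset (Fin n)) : Prop :=
  ¬ ∃ a b a' b' : Fin n, CyclicallyOrdered a b a' b' ∧
    a ∈ I \ J ∧ a' ∈ I \ J ∧ b ∈ J \ I ∧ b' ∈ J \ I

def cycIco {n : ℕ} (i j : Fin n) : Finset (Fin n) :=
  Finset.univ.filter (fun x => cpos i x < cpos i j)

def cycIcc {n : ℕ} (i j : Fin n) : Finset (Fin n) :=
  Finset.univ.filter (fun x => cpos i x ≤ cpos i j)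

def cycOpen {n : ℕ} (i j : Fin n) : Finset (Fin n) :=
  Finset.univ.filter (fun x => 0 < cpos i x ∧ cpos i x < cpos i j)

def IsGrassmannNecklace {n : ℕ} [NeZero n] (k : ℕ) (I : Fin n → Finset (Fin n)) : Prop :=
  (∀ i, (I i).card = k) ∧ (∀ i, I i \ {i} ⊆ I (i + 1)) ∧ (∀ i, i ∉ I i → I (i + 1) = I i)

def leShift {n : ℕ} (i : Fin n) (A B : Finset (Fin n)) : Prop :=
  List.Forall₂ (· ≤ ·) ((A.image (fun x => x - i)).sort (· ≤ ·))
    ((B.image (fun x => x - i)).sort (· ≤ ·))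

def MemPositroid {n : ℕ} (I : Fin n → Finset (Fin n)) (J : Finset (Fin n)) : Prop :=
  ∀ i, leShift i (I i) J

def IsWSCollection {n : ℕ} (C : Finset (Finset (Fin n))) : Prop :=
  ∀ X ∈ C, ∀ Y ∈ C, WeaklySeparated X Y

def IsMaxWSCollection {n : ℕ} (k : ℕ) (C : Finset (Finset (Fin n))) : Prop :=
  (∀ X ∈ C, X.card = k) ∧ IsWSCollection C ∧
  ∀ C' : Finset (Finset (Fin n)), C ⊆ C' → (∀ X ∈ C', X.card = k) → IsWSCollection C' → C' = C

namespace Stmt18Aux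

open Finset

/-- number of elements of `X` in the cyclic interval `[s, y]` (positions from `s`). -/
def cnt {n : ℕ} (s : Fin n) (X : Finset (Fin n)) (y : Fin n) : ℕ :=
  (X.filter (fun z => cpos s z ≤ cpos s y)).card

variable {n : ℕ} [NeZero n]

lemma cpos_lt_n (s x : Fin n) : cpos s x < n := (x - s).isLt

lemma cpos_inj {s x y : Fin n} (h : cpos s x = cpos s y) : x = y := by
  have h1 : x - s = y - s := Fin.ext h
  exact sub_left_injective h1

lemma val_sub (a b : Fin n) : (a - b).val = ((n - b.val) + a.val) % n := by
  rw [Fin.sub_def]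

lemma cpos_of_le {s x y : Fin n} (h : cpos s x ≤ cpos s y) :
    cpos x y = cpos s y - cpos s x := by
  have h1 : y - x = (y - s) - (x - s) := by abel
  have h2 : cpos s y < n := cpos_lt_n s y
  have h3 : cpos s x < n := cpos_lt_n s x
  show (y - x).val = _
  rw [h1, val_sub]
  show (n - cpos s x + cpos s y) % n = cpos s y - cpos s x
  have h4 : n - cpos s x + cpos s y = n + (cpos s y - cpos s x) := by omega
  rw [h4, Nat.add_mod_left, Nat.mod_eq_of_lt (by omega)]

lemma cpos_of_gt {s x y : Fin n} (h : cpos s y < cpos s x) :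
    cpos x y = (n - cpos s x) + cpos s y := by
  have h1 : y - x = (y - s) - (x - s) := by abel
  have h2 : cpos s x < n := cpos_lt_n s x
  show (y - x).val = _
  rw [h1, val_sub]
  show (n - cpos s x + cpos s y) % n = _
  exact Nat.mod_eq_of_lt (by omega)

lemma countP_le_of_forall2 {α : Type*} [LinearOrder α] {a b : List α}
    (h : List.Forall₂ (· ≤ ·) a b) (t : α) :
    b.countP (fun z => decide (z ≤ t)) ≤ a.countP (fun z => decide (z ≤ t)) := by
  induction h with
  | nil => simp
  | @cons x y a' b' hxy hf ih =>
    simp only [List.countP_cons]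
    by_cases hy : y ≤ t
    · have hx : x ≤ t := le_trans hxy hy
      simp only [hy, hx, decide_eq_true, if_pos]
      omega
    · have hdy : decide (y ≤ t) = false := decide_eq_false hy
      rw [hdy]
      simp only [Bool.false_eq_true, if_false, add_zero]
      exact le_trans ih (Nat.le_add_right _ _)

lemma forall2_of_countP {α : Type*} [LinearOrder α] :
    ∀ (a b : List α), a.Pairwise (· < ·) → b.Pairwise (· < ·) → a.length = b.length →
    (∀ t, b.countP (fun z => decide (z ≤ t)) ≤ a.countP (fun z => decide (z ≤ t))) →
    List.Forall₂ (· ≤ ·) a b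
  | [], [], _, _, _, _ => List.Forall₂.nil
  | [], _ :: _, _, _, hl, _ => by simp at hl
  | _ :: _, [], _, _, hl, _ => by simp at hl
  | x :: a', y :: b', hsa, hsb, hl, hc => by
    have hsa' := List.pairwise_cons.mp hsa
    have hsb' := List.pairwise_cons.mp hsb
    have hxy : x ≤ y := by
      by_contra hlt
      push_neg at hlt
      have h1 : (x :: a').countP (fun z => decide (z ≤ y)) = 0 := by
        apply List.countP_eq_zero.mpr
        intro z hz
        have hyz : y < z := by
          rcases List.mem_cons.mp hz with rfl | hz'
          · exact hlt
          · exact lt_trans hlt (hsa'.1 z hz')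
        simp [not_le.mpr hyz]
      have h2 := hc y
      rw [h1, List.countP_cons] at h2
      simp at h2
    refine List.Forall₂.cons hxy ?_
    apply forall2_of_countP a' b' hsa'.2 hsb'.2 (by simpa using hl)
    intro t
    by_cases hy : y ≤ t
    · have hx : x ≤ t := le_trans hxy hy
      have h2 := hc t
      rw [List.countP_cons, List.countP_cons, decide_eq_true hx, decide_eq_true hy] at h2
      simp only [if_pos] at h2
      omega
    · have h0 : b'.countP (fun z => decide (z ≤ t)) = 0 := by
        apply List.countP_eq_zero.mpr
        intro z hz
        have : t < z := lt_of_lt_of_le (not_le.mp hy) (le_of_lt (hsb'.1 z hz))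
        simp [not_le.mpr this]
      simp [h0]

lemma countP_sort_eq {α : Type*} [LinearOrder α] (X : Finset α) (p : α → Prop) [DecidablePred p] :
    (X.sort (· ≤ ·)).countP (fun z => decide (p z)) = (X.filter p).card := by
  calc (X.sort (· ≤ ·)).countP (fun z => decide (p z))
      = Multiset.countP p (X.sort (· ≤ ·) : Multiset α) := rfl
    _ = Multiset.countP p X.1 := by rw [Finset.sort_eq]
    _ = (X.filter p).card := by rw [Multiset.countP_eq_card_filter]; rfl

lemma cnt_image (s t : Fin n) (X : Finset (Fin n)) :
    ((X.image (fun x => x - s)).filter (fun z => z ≤ t)).card = cnt s X (t + s) := by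
  rw [Finset.filter_image, Finset.card_image_of_injective _ sub_left_injective]
  unfold cnt
  congr 1
  apply Finset.filter_congr
  intro z _
  have h1 : (t + s) - s = t := by abel
  show z - s ≤ t ↔ cpos s z ≤ cpos s (t + s)
  unfold cpos
  rw [h1, Fin.le_def]

lemma leShift_iff (s : Fin n) {A B : Finset (Fin n)} (hAB : A.card = B.card) :
    leShift s A B ↔ ∀ y : Fin n, cnt s B y ≤ cnt s A y := by
  unfold leShift
  constructor
  · intro h y
    have hc := countP_le_of_forall2 h (y - s)
    rw [countP_sort_eq, countP_sort_eq, cnt_image, cnt_image, sub_add_cancel] at hc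
    exact hc
  · intro h
    apply forall2_of_countP _ _ (Finset.sortedLT_sort _).pairwise (Finset.sortedLT_sort _).pairwise
    · rw [Finset.length_sort, Finset.length_sort,
        Finset.card_image_of_injective _ sub_left_injective,
        Finset.card_image_of_injective _ sub_left_injective, hAB]
    · intro t
      rw [countP_sort_eq, countP_sort_eq, cnt_image, cnt_image]
      exact h (t + s)

open Fin.NatCast in
/-- Dominance: among the necklace sets, `I s` has the most elements in every
initial cyclic interval starting at `s`. -/
lemma dom {k : ℕ} {I : Fin n → Finset (Fin n)} (hI : IsGrassmannNecklace k I)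
    (s x r : Fin n) : cnt s (I r) x ≤ cnt s (I s) x := by
  obtain ⟨hcard, hsub, _⟩ := hI
  have p_def : True := trivial
  have stepA : ∀ i : Fin n, cpos s i ≤ cpos s x → cnt s (I (i+1)) x ≤ cnt s (I i) x := by
    intro i hi
    have hcompl1 : (I i).filter (fun z => ¬ (cpos s z ≤ cpos s x)) ⊆
        (I (i+1)).filter (fun z => ¬ (cpos s z ≤ cpos s x)) := by
      intro z hz
      rw [Finset.mem_filter] at hz ⊢
      refine ⟨hsub i ?_, hz.2⟩
      rw [Finset.mem_sdiff, Finset.mem_singleton]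
      exact ⟨hz.1, fun h => hz.2 (h ▸ hi)⟩
    have h1 := Finset.card_le_card hcompl1
    have e1 : ((I i).filter (fun z => cpos s z ≤ cpos s x)).card
        + ((I i).filter (fun z => ¬ (cpos s z ≤ cpos s x))).card = (I i).card :=
      Finset.card_filter_add_card_filter_not _
    have e2 : ((I (i+1)).filter (fun z => cpos s z ≤ cpos s x)).card
        + ((I (i+1)).filter (fun z => ¬ (cpos s z ≤ cpos s x))).card = (I (i+1)).card :=
      Finset.card_filter_add_card_filter_not _
    rw [hcard i] at e1
    rw [hcard (i+1)] at e2
    unfold cnt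
    omega
  have stepB : ∀ i : Fin n, ¬ (cpos s i ≤ cpos s x) → cnt s (I i) x ≤ cnt s (I (i+1)) x := by
    intro i hi
    apply Finset.card_le_card
    intro z hz
    rw [Finset.mem_filter] at hz ⊢
    refine ⟨hsub i ?_, hz.2⟩
    rw [Finset.mem_sdiff, Finset.mem_singleton]
    exact ⟨hz.1, fun h => hi (h ▸ hz.2)⟩
  have hFstep : ∀ t : ℕ, (s + ((t+1 : ℕ) : Fin n)) = (s + (t : Fin n)) + 1 := by
    intro t; push_cast; abel
  have hcpos_add : ∀ t : ℕ, t < n → cpos s (s + (t : Fin n)) = t := by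
    intro t ht
    have h1 : (s + (t : Fin n)) - s = (t : Fin n) := by abel
    show ((s + (t : Fin n)) - s).val = t
    rw [h1, Fin.val_natCast, Nat.mod_eq_of_lt ht]
  have claim1 : ∀ t : ℕ, t ≤ n → t ≤ cpos s x + 1 → cnt s (I (s + (t : Fin n))) x ≤ cnt s (I s) x := by
    intro t
    induction t with
    | zero => intro _ _; simp
    | succ m ih =>
      intro h1 h2
      have hm : m < n := by omega
      have hst := stepA (s + (m : Fin n)) (by rw [hcpos_add m hm]; omega)
      rw [← hFstep m] at hst
      exact le_trans hst (ih (by omega) (by omega))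
  have claim2 : ∀ d m : ℕ, cpos s x + 1 ≤ m → m + d = n →
      cnt s (I (s + (m : Fin n))) x ≤ cnt s (I (s + ((n : ℕ) : Fin n))) x := by
    intro d
    induction d with
    | zero => intro m h1 h2; rw [show m = n from by omega]
    | succ e ih =>
      intro m h1 h2
      have hm : m < n := by omega
      have hst := stepB (s + (m : Fin n)) (by rw [hcpos_add m hm]; omega)
      rw [← hFstep m] at hst
      exact le_trans hst (ih (m+1) (by omega) (by omega))
  have hr : s + ((cpos s r : ℕ) : Fin n) = r := by
    show s + (((r - s : Fin n).val : ℕ) : Fin n) = r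
    rw [Fin.cast_val_eq_self]
    abel
  by_cases hcase : cpos s r ≤ cpos s x
  · have := claim1 (cpos s r) (le_of_lt (cpos_lt_n s r)) (by omega)
    rwa [hr] at this
  · have := claim2 (n - cpos s r) (cpos s r) (by omega) (by have := cpos_lt_n s r; omega)
    rw [hr] at this
    rwa [Fin.natCast_self, add_zero] at this

lemma exists_mem_not_mem {α : Type*} {s t : Finset α} (h : s.card < t.card) :
    ∃ x ∈ t, x ∉ s := by
  by_contra hcon
  push_neg at hcon
  exact absurd (Finset.card_le_card hcon) (not_le.mpr h)

lemma cnt_split (s : Fin n) (X : Finset (Fin n)) {y1 y2 : Fin n} (h : cpos s y1 ≤ cpos s y2) :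
    cnt s X y2 = cnt s X y1 +
      (X.filter (fun z => cpos s y1 < cpos s z ∧ cpos s z ≤ cpos s y2)).card := by
  unfold cnt
  have hsplit : X.filter (fun z => cpos s z ≤ cpos s y2) =
      X.filter (fun z => cpos s z ≤ cpos s y1) ∪
      X.filter (fun z => cpos s y1 < cpos s z ∧ cpos s z ≤ cpos s y2) := by
    rw [← Finset.filter_or]
    apply Finset.filter_congr
    intro z _
    constructor
    · intro hz; omega
    · intro hz; omega
  rw [hsplit, Finset.card_union_of_disjoint]
  rw [Finset.disjoint_left]
  intro z hz1 hz2
  rw [Finset.mem_filter] at hz1 hz2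
  omega

lemma cnt_top (s : Fin n) (X : Finset (Fin n)) (y : Fin n) :
    cnt s X y + (X.filter (fun z => cpos s y < cpos s z)).card = X.card := by
  unfold cnt
  have h2 : X.filter (fun z => cpos s y < cpos s z) =
      X.filter (fun z => ¬ (cpos s z ≤ cpos s y)) := by
    apply Finset.filter_congr
    intro z _
    omega
  rw [h2]
  exact Finset.card_filter_add_card_filter_not _

end Stmt18Aux

open Stmt18Aux Finset in
/-- If J is weakly separated from every member of a Grassmann necklace but not
in the positroid, then there is s ∈ [n] with J ≱_s I_s such that uniformly in
r, either the ≤_s-minimal element of J∖I_r precedes that of I_r∖J, or the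
≤_s-maximal element of I_r∖J exceeds that of J∖I_r. -/
theorem stmt_18 {n k : ℕ} [NeZero n] (I : Fin n → Finset (Fin n))
    (hI : IsGrassmannNecklace k I) (J : Finset (Fin n)) (hJk : J.card = k)
    (hws : ∀ r : Fin n, WeaklySeparated J (I r)) (hJ : ¬ MemPositroid I J) :
    ∃ s : Fin n, ¬ leShift s (I s) J ∧
      ((∀ r : Fin n, ∃ u ∈ J \ I r, ∀ v ∈ I r \ J, cpos s u < cpos s v) ∨
       (∀ r : Fin n, ∃ v ∈ I r \ J, ∀ u ∈ J \ I r, cpos s u < cpos s v)) := by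
  rw [MemPositroid, not_forall] at hJ
  obtain ⟨s, hs⟩ := hJ
  refine ⟨s, hs, ?_⟩
  by_contra hcon
  push_neg at hcon
  obtain ⟨h1, h2⟩ := hcon
  obtain ⟨r, hrmin⟩ := h1
  obtain ⟨r', hrmax⟩ := h2
  have hcard := hI.1
  have hdom : ∀ t y, cnt s (I t) y ≤ cnt s (I s) y := fun t y => dom hI s y t
  -- J differs from every necklace element
  have hne : ∀ t, J ≠ I t := by
    intro t h
    apply hs
    rw [h]
    exact (leShift_iff s (by rw [hcard s, hcard t])).mpr (fun y => hdom t y)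
  have hnonJ : ∀ t, (J \ I t).Nonempty := by
    intro t
    rw [Finset.nonempty_iff_ne_empty]
    intro h
    exact hne t (Finset.eq_of_subset_of_card_le (Finset.sdiff_eq_empty_iff_subset.mp h)
      (by rw [hcard t, hJk]))
  have hnonI : ∀ t, (I t \ J).Nonempty := by
    intro t
    rw [Finset.nonempty_iff_ne_empty]
    intro h
    exact (hne t (Finset.eq_of_subset_of_card_le (Finset.sdiff_eq_empty_iff_subset.mp h)
      (by rw [hcard t, hJk]) ).symm).elim
  -- there is a threshold where J beats I s
  have hexy : ∃ y, cnt s (I s) y < cnt s J y := by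
    by_contra hcon2
    push_neg at hcon2
    exact hs ((leShift_iff s (by rw [hcard s, hJk])).mpr hcon2)
  obtain ⟨ystar, hystar⟩ := hexy
  -- minimum of the symmetric difference with I r is in I r \ J
  obtain ⟨v, hvD, hvmin⟩ := Finset.exists_min_image ((J \ I r) ∪ (I r \ J)) (cpos s)
    (Finset.Nonempty.mono Finset.subset_union_left (hnonJ r))
  have hvI : v ∈ I r \ J := by
    rcases Finset.mem_union.mp hvD with hv | hv
    · exfalso
      obtain ⟨v', hv'I, hle⟩ := hrmin v hv
      have hge := hvmin v' (Finset.mem_union_right _ hv'I)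
      have hvv : v' = v := cpos_inj (le_antisymm hle hge)
      rw [hvv] at hv'I
      exact (Finset.mem_sdiff.mp hv'I).2 (Finset.mem_sdiff.mp hv).1
    · exact hv
  have hvIr : v ∈ I r := (Finset.mem_sdiff.mp hvI).1
  have hvJ : v ∉ J := (Finset.mem_sdiff.mp hvI).2
  -- maximum of the symmetric difference with I r' is in J \ I r'
  obtain ⟨w, hwD, hwmax⟩ := Finset.exists_max_image ((J \ I r') ∪ (I r' \ J)) (cpos s)
    (Finset.Nonempty.mono Finset.subset_union_left (hnonJ r'))
  have hwJd : w ∈ J \ I r' := by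
    rcases Finset.mem_union.mp hwD with hw | hw
    · exact hw
    · exfalso
      obtain ⟨u', hu'J, hle⟩ := hrmax w hw
      have hge := hwmax u' (Finset.mem_union_left _ hu'J)
      have hww : u' = w := cpos_inj (le_antisymm hge hle)
      rw [hww] at hu'J
      exact (Finset.mem_sdiff.mp hu'J).2 (Finset.mem_sdiff.mp hw).1
  have hwJ : w ∈ J := (Finset.mem_sdiff.mp hwJd).1
  have hwIr : w ∉ I r' := (Finset.mem_sdiff.mp hwJd).2
  -- low region: J is dominated by I s up to v
  have hlowlt : ∀ y, cpos s y < cpos s v → cnt s J y = cnt s (I r) y := by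
    intro y hy
    unfold cnt
    congr 1
    apply Finset.ext
    intro z
    rw [Finset.mem_filter, Finset.mem_filter]
    constructor
    · rintro ⟨hzJ, hzy⟩
      refine ⟨?_, hzy⟩
      by_contra hzI
      have := hvmin z (Finset.mem_union_left _ (Finset.mem_sdiff.mpr ⟨hzJ, hzI⟩))
      omega
    · rintro ⟨hzI, hzy⟩
      refine ⟨?_, hzy⟩
      by_contra hzJ
      have := hvmin z (Finset.mem_union_right _ (Finset.mem_sdiff.mpr ⟨hzI, hzJ⟩))
      omega
  have hEv : cnt s J v < cnt s (I s) v := by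
    have hss : J.filter (fun z => cpos s z ≤ cpos s v) ⊂
        (I r).filter (fun z => cpos s z ≤ cpos s v) := by
      constructor
      · intro z hz
        rw [Finset.mem_filter] at hz ⊢
        refine ⟨?_, hz.2⟩
        by_contra hzI
        have hmem := hvmin z (Finset.mem_union_left _ (Finset.mem_sdiff.mpr ⟨hz.1, hzI⟩))
        have : z = v := cpos_inj (le_antisymm hz.2 hmem)
        rw [this] at hz
        exact hvJ hz.1
      · intro hsub2
        have := hsub2 (Finset.mem_filter.mpr ⟨hvIr, le_refl _⟩)
        rw [Finset.mem_filter] at this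
        exact hvJ this.1
    exact lt_of_lt_of_le (Finset.card_lt_card hss) (hdom r v)
  have hlow : ∀ y, cpos s y ≤ cpos s v → cnt s J y ≤ cnt s (I s) y := by
    intro y hy
    rcases lt_or_eq_of_le hy with hy' | hy'
    · rw [hlowlt y hy']
      exact hdom r y
    · rw [cpos_inj hy']
      exact le_of_lt hEv
  -- high region: J is dominated by I s from w on
  have hsd : (J \ I r').card = (I r' \ J).card :=
    Finset.card_sdiff_comm (by rw [hJk, hcard r'])
  have hhighJ : ∀ y, cpos s w ≤ cpos s y → cnt s J y = cnt s (I r') y := by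
    intro y hy
    have hJsplit : J.filter (fun z => cpos s z ≤ cpos s y) =
        (J \ I r').filter (fun z => cpos s z ≤ cpos s y) ∪
        (J ∩ I r').filter (fun z => cpos s z ≤ cpos s y) := by
      rw [← Finset.filter_union, Finset.sdiff_union_inter]
    have hIsplit : (I r').filter (fun z => cpos s z ≤ cpos s y) =
        (I r' \ J).filter (fun z => cpos s z ≤ cpos s y) ∪
        (I r' ∩ J).filter (fun z => cpos s z ≤ cpos s y) := by
      rw [← Finset.filter_union, Finset.sdiff_union_inter]
    have hJfull : (J \ I r').filter (fun z => cpos s z ≤ cpos s y) = J \ I r' := by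
      apply Finset.filter_true_of_mem
      intro z hz
      have := hwmax z (Finset.mem_union_left _ hz)
      omega
    have hIfull : (I r' \ J).filter (fun z => cpos s z ≤ cpos s y) = I r' \ J := by
      apply Finset.filter_true_of_mem
      intro z hz
      have := hwmax z (Finset.mem_union_right _ hz)
      omega
    unfold cnt
    rw [hJsplit, hIsplit, Finset.card_union_of_disjoint, Finset.card_union_of_disjoint,
      hJfull, hIfull, hsd, Finset.inter_comm]
    · exact Finset.disjoint_filter_filter (Finset.disjoint_sdiff_inter (I r') J)
    · exact Finset.disjoint_filter_filter (Finset.disjoint_sdiff_inter J (I r'))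
  have hhigh : ∀ y, cpos s w ≤ cpos s y → cnt s J y ≤ cnt s (I s) y := by
    intro y hy
    rw [hhighJ y hy]
    exact hdom r' y
  -- position of the violating threshold
  have hvy : cpos s v < cpos s ystar := by
    by_contra hc
    push_neg at hc
    exact absurd (hlow ystar hc) (not_le.mpr hystar)
  have hyw : cpos s ystar < cpos s w := by
    by_contra hc
    push_neg at hc
    exact absurd (hhigh ystar hc) (not_le.mpr hystar)
  have hw1 : 1 ≤ cpos s w := by omega
  have hn2 : 2 ≤ n := by have := cpos_lt_n s w; omega
  -- the predecessor of w
  set y0 : Fin n := w - 1 with hy0def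
  have hy0 : cpos s y0 = cpos s w - 1 := by
    have h1 : y0 - s = (w - s) - 1 := by rw [hy0def]; abel
    show (y0 - s).val = _
    rw [h1, val_sub]
    have hv1 : (1 : Fin n).val = 1 := by
      rw [Fin.val_one']; exact Nat.mod_eq_of_lt (by omega)
    rw [hv1]
    have hlt : (w - s).val < n := (w - s).isLt
    have hge : 1 ≤ (w - s).val := hw1
    have he : n - 1 + (w - s).val = n + ((w - s).val - 1) := by omega
    show (n - 1 + (w - s).val) % n = _
    rw [he, Nat.add_mod_left, Nat.mod_eq_of_lt (by omega)]
    rfl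
  have hEy0 : cnt s J y0 < cnt s (I s) y0 := by
    -- at the threshold just below w, I r' strictly beats J
    have hiff : ∀ z, z ∈ (J \ I r') ∪ (I r' \ J) →
        ((cpos s z ≤ cpos s y0) ↔ z ≠ w) := by
      intro z hz
      have hle := hwmax z hz
      constructor
      · intro hzy hzw
        rw [hzw] at hzy
        omega
      · intro hzw
        have : cpos s z ≠ cpos s w := fun h => hzw (cpos_inj h)
        omega
    have hJsplit : J.filter (fun z => cpos s z ≤ cpos s y0) =
        (J \ I r').filter (fun z => cpos s z ≤ cpos s y0) ∪
        (J ∩ I r').filter (fun z => cpos s z ≤ cpos s y0) := by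
      rw [← Finset.filter_union, Finset.sdiff_union_inter]
    have hIsplit : (I r').filter (fun z => cpos s z ≤ cpos s y0) =
        (I r' \ J).filter (fun z => cpos s z ≤ cpos s y0) ∪
        (I r' ∩ J).filter (fun z => cpos s z ≤ cpos s y0) := by
      rw [← Finset.filter_union, Finset.sdiff_union_inter]
    have hJpart : (J \ I r').filter (fun z => cpos s z ≤ cpos s y0) = (J \ I r').erase w := by
      apply Finset.ext
      intro z
      rw [Finset.mem_filter, Finset.mem_erase]
      constructor
      · rintro ⟨hz, hzy⟩
        exact ⟨(hiff z (Finset.mem_union_left _ hz)).mp hzy, hz⟩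
      · rintro ⟨hzw, hz⟩
        exact ⟨hz, (hiff z (Finset.mem_union_left _ hz)).mpr hzw⟩
    have hIpart : (I r' \ J).filter (fun z => cpos s z ≤ cpos s y0) = I r' \ J := by
      apply Finset.filter_true_of_mem
      intro z hz
      refine (hiff z (Finset.mem_union_right _ hz)).mpr ?_
      intro hzw
      rw [hzw] at hz
      exact (Finset.mem_sdiff.mp hz).2 hwJ
    have hc1 : cnt s J y0 + 1 = cnt s (I r') y0 := by
      unfold cnt
      rw [hJsplit, hIsplit, Finset.card_union_of_disjoint, Finset.card_union_of_disjoint,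
        hJpart, hIpart, Finset.card_erase_of_mem hwJd, Finset.inter_comm]
      · have hpos : 1 ≤ (J \ I r').card := Finset.card_pos.mpr (hnonJ r')
        omega
      · exact Finset.disjoint_filter_filter (Finset.disjoint_sdiff_inter (I r') J)
      · exact Finset.disjoint_filter_filter (Finset.disjoint_sdiff_inter J (I r'))
    have := hdom r' y0
    omega
  have hyy0 : cpos s ystar ≤ cpos s y0 := by omega
  -- extract the four interlaced witnesses
  obtain ⟨b1, hb1mem, hb1not⟩ := exists_mem_not_mem hEv
  rw [Finset.mem_filter] at hb1mem
  have hb1J : b1 ∉ J := fun h => hb1not (Finset.mem_filter.mpr ⟨h, hb1mem.2⟩)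
  have hsplitJ1 := cnt_split s J (le_of_lt hvy)
  have hsplitS1 := cnt_split s (I s) (le_of_lt hvy)
  have hmid1 : ((I s).filter (fun z => cpos s v < cpos s z ∧ cpos s z ≤ cpos s ystar)).card <
      (J.filter (fun z => cpos s v < cpos s z ∧ cpos s z ≤ cpos s ystar)).card := by
    omega
  obtain ⟨a1, ha1mem, ha1not⟩ := exists_mem_not_mem hmid1
  rw [Finset.mem_filter] at ha1mem
  have ha1S : a1 ∉ I s := fun h => ha1not (Finset.mem_filter.mpr ⟨h, ha1mem.2⟩)
  have hsplitJ2 := cnt_split s J hyy0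
  have hsplitS2 := cnt_split s (I s) hyy0
  have hmid2 : (J.filter (fun z => cpos s ystar < cpos s z ∧ cpos s z ≤ cpos s y0)).card <
      ((I s).filter (fun z => cpos s ystar < cpos s z ∧ cpos s z ≤ cpos s y0)).card := by
    omega
  obtain ⟨b2, hb2mem, hb2not⟩ := exists_mem_not_mem hmid2
  rw [Finset.mem_filter] at hb2mem
  have hb2J : b2 ∉ J := fun h => hb2not (Finset.mem_filter.mpr ⟨h, hb2mem.2⟩)
  have htopJ := cnt_top s J y0
  have htopS := cnt_top s (I s) y0
  have htop : ((I s).filter (fun z => cpos s y0 < cpos s z)).card <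
      (J.filter (fun z => cpos s y0 < cpos s z)).card := by
    rw [hJk] at htopJ
    rw [hcard s] at htopS
    omega
  obtain ⟨a2, ha2mem, ha2not⟩ := exists_mem_not_mem htop
  rw [Finset.mem_filter] at ha2mem
  have ha2S : a2 ∉ I s := fun h => ha2not (Finset.mem_filter.mpr ⟨h, ha2mem.2⟩)
  -- the four positions are strictly increasing from s
  have hp1 : cpos s b1 < cpos s a1 := by omega
  have hp2 : cpos s a1 < cpos s b2 := by omega
  have hp3 : cpos s b2 < cpos s a2 := by omega
  have hpn : cpos s a2 < n := cpos_lt_n s a2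
  -- contradiction with weak separation of J and I s
  apply hws s
  refine ⟨a1, b2, a2, b1, ?_, Finset.mem_sdiff.mpr ⟨ha1mem.1, ha1S⟩,
    Finset.mem_sdiff.mpr ⟨ha2mem.1, ha2S⟩, Finset.mem_sdiff.mpr ⟨hb2mem.1, hb2J⟩,
    Finset.mem_sdiff.mpr ⟨hb1mem.1, hb1J⟩⟩
  have e1 : cpos a1 b2 = cpos s b2 - cpos s a1 := cpos_of_le (le_of_lt hp2)
  have e2 : cpos a1 a2 = cpos s a2 - cpos s a1 := cpos_of_le (le_of_lt (lt_trans hp2 hp3))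
  have e3 : cpos a1 b1 = (n - cpos s a1) + cpos s b1 := cpos_of_gt hp1
  refine ⟨?_, ?_, ?_⟩
  · omega
  · omega
  · omega
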